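/- Let B be an sp-bisimulation between nets N₁ and N₂, and B′ an sp-bisimulation between N₂ and N₃. For linkings h ∈ ℕ^{S₁×S₃}, k ∈ ℕ^{S₁×S₂}, l ∈ ℕ^{S₂×S₃}, write h ∈ k;l if there is a multiset m ∈ ℕ^{S₁×S₂×S₃} with k(s₁,s₂) = Σ_{s₃} m(s₁,s₂,s₃), l(s₂,s₃) = Σ_{s₁} m(s₁,s₂,s₃), and h(s₁,s₃) = Σ_{s₂} m(s₁,s₂,s₃). Then B;B′ := {h | h ∈ k;l for some k ∈ B and l ∈ B′} is an sp-bisimulation between N₁ and N₃; consequently ≈sp is transitive. -/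
import Mathlib


open scoped Classical

/-- A typed Petri net over the action alphabet `Act`.  The flow relation (with arc
weights) is presented through the pre- and post-multisets of each transition. -/
structure PetriNet (Act : Type) : Type 1 where
  Plc : Type
  Tr : Type
  pre : Tr → Multiset Plc
  post : Tr → Multiset Plc
  M0 : Multiset Plc
  typ : Set Act
  lbl : Tr → Act
  lbl_mem : ∀ t, lbl t ∈ typ

namespace PetriNet

variable {Act : Type}

/-- `M [t⟩ M'`: transition `t` is enabled at the marking `M` and firing it yields `M'`. -/
def fires (N : PetriNet Act) (M : Multiset N.Plc) (t : N.Tr) (M' : Multiset N.Plc) : Prop :=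
  N.pre t ≤ M ∧ M' = M - N.pre t + N.post t

/-- The markings reachable from the initial marking (i.e. occurring in some path). -/
inductive Reachable (N : PetriNet Act) : Multiset N.Plc → Prop
  | init : Reachable N N.M0
  | step {M : Multiset N.Plc} {t : N.Tr} {M' : Multiset N.Plc} :
      Reachable N M → N.fires M t M' → Reachable N M'

/-- Bounded parallelism: no reachable marking `M` admits an infinite multiset `U` of
transitions with `∑_{t ∈ U} •t ≤ M`. -/
def BoundedParallelism (N : PetriNet Act) : Prop :=
  ¬ ∃ (M : Multiset N.Plc) (U : N.Tr → ℕ), N.Reachable M ∧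
      (Function.support U).Infinite ∧
      ∀ F : Finset N.Tr, (∑ t ∈ F, U t • N.pre t) ≤ M

/-- A net is safe if every reachable marking is a plain set. -/
def Safe (N : PetriNet Act) : Prop := ∀ M, N.Reachable M → M.Nodup

end PetriNet

/-- A linking between two nets: a multiset of links, i.e. of pairs of places. -/
abbrev Linking {Act : Type} (N₁ N₂ : PetriNet Act) : Type := Multiset (N₁.Plc × N₂.Plc)

/-- First projection of a linking: the induced marking of the first net. -/
def Linking.proj1 {Act : Type} {N₁ N₂ : PetriNet Act} (l : Linking N₁ N₂) :
    Multiset N₁.Plc := l.map Prod.fst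

/-- Second projection of a linking: the induced marking of the second net. -/
def Linking.proj2 {Act : Type} {N₁ N₂ : PetriNet Act} (l : Linking N₁ N₂) :
    Multiset N₂.Plc := l.map Prod.snd

/-- `B` is a structure preserving bisimulation between `N₁` and `N₂`. -/
def IsSPBisim {Act : Type} (N₁ N₂ : PetriNet Act) (B : Set (Linking N₁ N₂)) : Prop :=
  (∀ c l : Linking N₁ N₂, l ∈ B → c ≤ l → ∀ t₁ : N₁.Tr, c.proj1 = N₁.pre t₁ →
      ∃ t₂ : N₂.Tr, N₂.lbl t₂ = N₁.lbl t₁ ∧ c.proj2 = N₂.pre t₂ ∧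
        ∃ cbar : Linking N₁ N₂, cbar.proj1 = N₁.post t₁ ∧ cbar.proj2 = N₂.post t₂ ∧
          l - c + cbar ∈ B) ∧
  (∀ c l : Linking N₁ N₂, l ∈ B → c ≤ l → ∀ t₂ : N₂.Tr, c.proj2 = N₂.pre t₂ →
      ∃ t₁ : N₁.Tr, N₁.lbl t₁ = N₂.lbl t₂ ∧ c.proj1 = N₁.pre t₁ ∧
        ∃ cbar : Linking N₁ N₂, cbar.proj1 = N₁.post t₁ ∧ cbar.proj2 = N₂.post t₂ ∧
          l - c + cbar ∈ B)

/-- Structure preserving bisimilarity `N₁ ≈sp N₂`. -/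
def SPBisimilar {Act : Type} (N₁ N₂ : PetriNet Act) : Prop :=
  N₁.typ = N₂.typ ∧ ∃ B : Set (Linking N₁ N₂), IsSPBisim N₁ N₂ B ∧
    ∃ l ∈ B, l.proj1 = N₁.M0 ∧ l.proj2 = N₂.M0

/-- `h ∈ k;l`: the linking `h` is a relational composition of `k` and `l`, witnessed by
a multiset `m` of triples of places projecting to `k`, `l` and `h` respectively. -/
def LinkingComp {Act : Type} {N₁ N₂ N₃ : PetriNet Act}
    (k : Linking N₁ N₂) (l : Linking N₂ N₃) (h : Linking N₁ N₃) : Prop :=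
  ∃ m : Multiset (N₁.Plc × N₂.Plc × N₃.Plc),
    k = m.map (fun x => (x.1, x.2.1)) ∧
    l = m.map (fun x => (x.2.1, x.2.2)) ∧
    h = m.map (fun x => (x.1, x.2.2))


theorem Multiset.exists_le_of_le_map {α β : Type*} {f : α → β} {s : Multiset α}
    {c : Multiset β} (h : c ≤ s.map f) : ∃ d ≤ s, d.map f = c := by
  induction s using Multiset.induction generalizing c with
  | empty => simp at h; exact ⟨0, le_refl _, by simp [h]⟩
  | cons a s ih =>
    rw [Multiset.map_cons] at h
    by_cases hfa : f a ∈ c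
    · obtain ⟨c', rfl⟩ := Multiset.exists_cons_of_mem hfa
      obtain ⟨d, hd, hdm⟩ := ih ((Multiset.cons_le_cons_iff (f a)).mp h)
      exact ⟨a ::ₘ d, Multiset.cons_le_cons a hd, by simp [hdm]⟩
    · obtain ⟨d, hd, hdm⟩ := ih ((Multiset.le_cons_of_notMem hfa).mp h)
      exact ⟨d, hd.trans (Multiset.le_cons_self s a), hdm⟩

/-- Glue two multisets of pairs along a common middle projection. -/
theorem Multiset.exists_glue {α β γ : Type*} (u : Multiset (α × β)) (v : Multiset (β × γ))
    (h : u.map Prod.snd = v.map Prod.fst) :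
    ∃ w : Multiset (α × β × γ), w.map (fun x => (x.1, x.2.1)) = u ∧
      w.map (fun x => (x.2.1, x.2.2)) = v := by
  induction u using Multiset.induction generalizing v with
  | empty =>
    simp only [Multiset.map_zero] at h
    have : v = 0 := by
      rcases Multiset.empty_or_exists_mem v with h0 | ⟨x, hx⟩
      · exact h0
      · exact absurd (Multiset.mem_map_of_mem Prod.fst hx) (by rw [← h]; simp)
    exact ⟨0, by simp, by simp [this]⟩
  | cons p u ih =>
    have hmem : p.2 ∈ v.map Prod.fst := by rw [← h]; simp
    obtain ⟨q, hq, hq2⟩ := Multiset.mem_map.mp hmem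
    have hv : v = q ::ₘ v.erase q := (Multiset.cons_erase hq).symm
    have h' : u.map Prod.snd = (v.erase q).map Prod.fst := by
      have := h
      rw [hv, Multiset.map_cons, Multiset.map_cons, hq2] at this
      exact (Multiset.cons_inj_right _).mp this
    obtain ⟨w, hw1, hw2⟩ := ih (v.erase q) h'
    refine ⟨(p.1, p.2, q.2) ::ₘ w, by simp [hw1], ?_⟩
    rw [Multiset.map_cons, hw2]
    show (p.2, q.2) ::ₘ v.erase q = v
    have hqe : (p.2, q.2) = q := by rw [← hq2]
    rw [hqe, Multiset.cons_erase hq]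

theorem Multiset.map_sub_of_le' {α β : Type*} {f : α → β} {s d : Multiset α} (h : d ≤ s) :
    (s - d).map f = s.map f - d.map f := by
  have : (s - d).map f + d.map f = s.map f := by
    rw [← Multiset.map_add, tsub_add_cancel_of_le h]
  exact eq_tsub_of_add_eq this

/-- The composition of two sp-bisimulations is an sp-bisimulation. -/
theorem comp_isSPBisim {Act : Type} {N₁ N₂ N₃ : PetriNet Act}
    {B : Set (Linking N₁ N₂)} {B' : Set (Linking N₂ N₃)}
    (hB : IsSPBisim N₁ N₂ B) (hB' : IsSPBisim N₂ N₃ B') :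
    IsSPBisim N₁ N₃ {h : Linking N₁ N₃ | ∃ k ∈ B, ∃ l ∈ B', LinkingComp k l h} := by
  constructor
  · rintro c h ⟨k, hk, l, hl, m, hkm, hlm, hhm⟩ hc t₁ hpre
    rw [hhm] at hc
    obtain ⟨d, hd, hdm⟩ := Multiset.exists_le_of_le_map hc
    have hc12 : (d.map (fun x => (x.1, x.2.1)) : Linking N₁ N₂) ≤ k := by
      rw [hkm]; exact Multiset.map_le_map hd
    have hp1 : Linking.proj1 (d.map (fun x => (x.1, x.2.1))) = N₁.pre t₁ := by
      rw [← hpre, ← hdm]; simp [Linking.proj1, Multiset.map_map, Function.comp]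
    obtain ⟨t₂, hlbl₂, hpre₂, cbar, hcb1, hcb2, hkB⟩ :=
      hB.1 _ k hk hc12 t₁ hp1
    have hc23 : (d.map (fun x => (x.2.1, x.2.2)) : Linking N₂ N₃) ≤ l := by
      rw [hlm]; exact Multiset.map_le_map hd
    have hp2 : Linking.proj1 (d.map (fun x => (x.2.1, x.2.2))) = N₂.pre t₂ := by
      rw [← hpre₂]; simp [Linking.proj1, Linking.proj2, Multiset.map_map, Function.comp]
    obtain ⟨t₃, hlbl₃, hpre₃, cbar', hcb1', hcb2', hlB'⟩ :=
      hB'.1 _ l hl hc23 t₂ hp2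
    have hglue : cbar.map Prod.snd = cbar'.map Prod.fst := by
      show cbar.proj2 = cbar'.proj1
      rw [hcb2, hcb1']
    obtain ⟨w, hw1, hw2⟩ := Multiset.exists_glue cbar cbar' hglue
    refine ⟨t₃, hlbl₃.trans hlbl₂, ?_, w.map (fun x => (x.1, x.2.2)), ?_, ?_, ?_⟩
    · rw [← hpre₃, ← hdm]
      simp [Linking.proj1, Linking.proj2, Multiset.map_map, Function.comp]
    · rw [← hcb1, ← hw1]
      simp [Linking.proj1, Multiset.map_map, Function.comp]
    · rw [← hcb2', ← hw2]
      simp [Linking.proj2, Multiset.map_map, Function.comp]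
    · refine ⟨k - d.map (fun x => (x.1, x.2.1)) + cbar, hkB,
        l - d.map (fun x => (x.2.1, x.2.2)) + cbar', hlB', m - d + w, ?_, ?_, ?_⟩
      · rw [Multiset.map_add, hw1, hkm]; congr 1
        exact (eq_tsub_of_add_eq (by rw [← Multiset.map_add, tsub_add_cancel_of_le hd])).symm
      · rw [Multiset.map_add, hw2, hlm]; congr 1
        exact (eq_tsub_of_add_eq (by rw [← Multiset.map_add, tsub_add_cancel_of_le hd])).symm
      · rw [Multiset.map_add, hhm, ← hdm]; congr 1
        exact (eq_tsub_of_add_eq (by rw [← Multiset.map_add, tsub_add_cancel_of_le hd])).symm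
  · rintro c h ⟨k, hk, l, hl, m, hkm, hlm, hhm⟩ hc t₃ hpre
    rw [hhm] at hc
    obtain ⟨d, hd, hdm⟩ := Multiset.exists_le_of_le_map hc
    have hc23 : (d.map (fun x => (x.2.1, x.2.2)) : Linking N₂ N₃) ≤ l := by
      rw [hlm]; exact Multiset.map_le_map hd
    have hp3 : Linking.proj2 (d.map (fun x => (x.2.1, x.2.2))) = N₃.pre t₃ := by
      rw [← hpre, ← hdm]; simp [Linking.proj2, Multiset.map_map, Function.comp]
    obtain ⟨t₂, hlbl₂, hpre₂, cbar', hcb1', hcb2', hlB'⟩ :=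
      hB'.2 _ l hl hc23 t₃ hp3
    have hc12 : (d.map (fun x => (x.1, x.2.1)) : Linking N₁ N₂) ≤ k := by
      rw [hkm]; exact Multiset.map_le_map hd
    have hp2 : Linking.proj2 (d.map (fun x => (x.1, x.2.1))) = N₂.pre t₂ := by
      rw [← hpre₂]; simp [Linking.proj1, Linking.proj2, Multiset.map_map, Function.comp]
    obtain ⟨t₁, hlbl₁, hpre₁, cbar, hcb1, hcb2, hkB⟩ :=
      hB.2 _ k hk hc12 t₂ hp2
    have hglue : cbar.map Prod.snd = cbar'.map Prod.fst := by
      show cbar.proj2 = cbar'.proj1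
      rw [hcb2, hcb1']
    obtain ⟨w, hw1, hw2⟩ := Multiset.exists_glue cbar cbar' hglue
    refine ⟨t₁, hlbl₁.trans hlbl₂, ?_, w.map (fun x => (x.1, x.2.2)), ?_, ?_, ?_⟩
    · rw [← hpre₁, ← hdm]
      simp [Linking.proj1, Multiset.map_map, Function.comp]
    · rw [← hcb1, ← hw1]
      simp [Linking.proj1, Multiset.map_map, Function.comp]
    · rw [← hcb2', ← hw2]
      simp [Linking.proj2, Multiset.map_map, Function.comp]
    · refine ⟨k - d.map (fun x => (x.1, x.2.1)) + cbar, hkB,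
        l - d.map (fun x => (x.2.1, x.2.2)) + cbar', hlB', m - d + w, ?_, ?_, ?_⟩
      · rw [Multiset.map_add, hw1, hkm]; congr 1
        exact (eq_tsub_of_add_eq (by rw [← Multiset.map_add, tsub_add_cancel_of_le hd])).symm
      · rw [Multiset.map_add, hw2, hlm]; congr 1
        exact (eq_tsub_of_add_eq (by rw [← Multiset.map_add, tsub_add_cancel_of_le hd])).symm
      · rw [Multiset.map_add, hhm, ← hdm]; congr 1
        exact (eq_tsub_of_add_eq (by rw [← Multiset.map_add, tsub_add_cancel_of_le hd])).symm

/-- The composition `B;B'` of sp-bisimulations is an sp-bisimulation; consequently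
`≈sp` is transitive. -/
theorem spBisim_comp_and_trans {Act : Type} (N₁ N₂ N₃ : PetriNet Act)
    (h₁ : N₁.BoundedParallelism) (h₂ : N₂.BoundedParallelism)
    (h₃ : N₃.BoundedParallelism)
    (B : Set (Linking N₁ N₂)) (B' : Set (Linking N₂ N₃))
    (hB : IsSPBisim N₁ N₂ B) (hB' : IsSPBisim N₂ N₃ B') :
    IsSPBisim N₁ N₃ {h : Linking N₁ N₃ | ∃ k ∈ B, ∃ l ∈ B', LinkingComp k l h} ∧
      (SPBisimilar N₁ N₂ → SPBisimilar N₂ N₃ → SPBisimilar N₁ N₃) := by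
  constructor
  · exact comp_isSPBisim hB hB'
  · rintro ⟨htyp, C, hC, l₀, hl₀, hl₀1, hl₀2⟩ ⟨htyp', C', hC', l₀', hl₀', hl₀1', hl₀2'⟩
    refine ⟨htyp.trans htyp',
      {h : Linking N₁ N₃ | ∃ k ∈ C, ∃ l ∈ C', LinkingComp k l h},
      comp_isSPBisim hC hC', ?_⟩
    have hglue : l₀.map Prod.snd = l₀'.map Prod.fst := by
      show l₀.proj2 = l₀'.proj1
      rw [hl₀2, hl₀1']
    obtain ⟨w, hw1, hw2⟩ := Multiset.exists_glue l₀ l₀' hglue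
    refine ⟨w.map (fun x => (x.1, x.2.2)), ⟨l₀, hl₀, l₀', hl₀', w, hw1.symm, hw2.symm, rfl⟩,
      ?_, ?_⟩
    · rw [← hl₀1, ← hw1]
      simp [Linking.proj1, Multiset.map_map, Function.comp]
    · rw [← hl₀2', ← hw2]
      simp [Linking.proj2, Multiset.map_map, Function.comp]
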